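/- arXiv:1810.04587 — 3 statements merged into one kernel-verified Lean document; each statement's English description precedes it below -/
import Mathlib

section
/- Let p be a prime, f, k positive integers, and x an integer. Then the sum of the p-adic digits of the representative of ((p^{fk}-1)/(p^f-1))·x modulo p^{fk}-1 taken in the range [0, p^{fk}-2] equals k times the sum of the p-adic digits of the representative of x modulo p^f-1 taken in the range [0, p^f-2]. -/
/-- Base-`p` digit sum. -/
def digitSum (p n : ℕ) : ℕ := (Nat.digits p n).sum

/-- Digit sum of the representative of `y` modulo `m` lying in `[0, m-1]`. -/
def repDigitSumNonneg (p m : ℕ) (y : ℤ) : ℕ := digitSum p (y % (m : ℤ)).toNat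

lemma digitSum_add_pow_mul {p f : ℕ} (hp : 1 < p) {a : ℕ} (ha : a < p ^ f) (b : ℕ) :
    digitSum p (a + p ^ f * b) = digitSum p a + digitSum p b := by
  rcases Nat.eq_zero_or_pos b with rfl | hb
  · simp [digitSum]
  have hlen : (Nat.digits p a).length ≤ f := by
    rcases Nat.eq_zero_or_pos a with rfl | ha0
    · simp
    rw [Nat.digits_len p a hp ha0.ne']
    exact Nat.log_lt_of_lt_pow ha0.ne' ha
  have key := Nat.digits_append_zeroes_append_digits (b := p) (k := f - (Nat.digits p a).length)
    (m := b) (n := a) hp hb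
  rw [Nat.add_sub_cancel' hlen] at key
  unfold digitSum
  rw [← key]
  simp

lemma digitSum_geom {p f : ℕ} (hp : 1 < p) {r : ℕ} (hr : r < p ^ f) (k : ℕ) :
    digitSum p (∑ i ∈ Finset.range k, r * p ^ (f * i)) = k * digitSum p r := by
  induction k with
  | zero => simp [digitSum]
  | succ k ih =>
    have h1 : (∑ i ∈ Finset.range (k + 1), r * p ^ (f * i))
        = r + p ^ f * ∑ i ∈ Finset.range k, r * p ^ (f * i) := by
      rw [Finset.sum_range_succ', Finset.mul_sum]
      simp only [mul_zero, pow_zero, mul_one, mul_add, mul_one]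
      rw [add_comm]
      congr 1
      refine Finset.sum_congr rfl fun i _ => ?_
      rw [pow_add]
      ring
    rw [h1, digitSum_add_pow_mul hp hr, ih]
    ring

lemma nat_geom_sum_mul (q k : ℕ) (hq : 1 ≤ q) :
    (q - 1) * ∑ i ∈ Finset.range k, q ^ i = q ^ k - 1 := by
  induction k with
  | zero => simp
  | succ k ih =>
    rw [Finset.sum_range_succ, mul_add, ih, Nat.sub_mul, one_mul, ← pow_succ']
    have h1 : 1 ≤ q ^ k := Nat.one_le_pow _ _ hq
    have h2 : q ^ k ≤ q * q ^ k := Nat.le_mul_of_pos_left _ hq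
    rw [pow_succ']
    omega

theorem hasse_davenport_digit_relation_minus (p f k : ℕ) (hp : p.Prime)
    (hf : 0 < f) (hk : 0 < k) (x : ℤ) :
    repDigitSumNonneg p (p ^ (f * k) - 1) ((((p ^ (f * k) - 1) / (p ^ f - 1) : ℕ) : ℤ) * x)
      = k * repDigitSumNonneg p (p ^ f - 1) x := by
  have hp1 : 1 < p := hp.one_lt
  set m : ℕ := p ^ f - 1 with hm
  set M : ℕ := p ^ (f * k) - 1 with hM
  have hpf : 2 ≤ p ^ f := by
    calc 2 = 2 ^ 1 := rfl
    _ ≤ p ^ f := Nat.pow_le_pow_left hp1 1 |>.trans (Nat.pow_le_pow_right (by omega) hf)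
  have hmpos : 0 < m := by omega
  set G : ℕ := ∑ i ∈ Finset.range k, (p ^ f) ^ i with hG
  have hMeq : M = m * G := by
    rw [hM, hm, hG, nat_geom_sum_mul _ _ (by omega), ← pow_mul]
  have hcG : M / m = G := by rw [hMeq, Nat.mul_div_cancel_left _ hmpos]
  have hG1 : 1 ≤ G := by
    rw [hG]
    calc 1 = (p ^ f) ^ 0 := rfl
    _ ≤ _ := Finset.single_le_sum (f := fun i => (p ^ f) ^ i) (fun i _ => Nat.zero_le _)
        (Finset.mem_range.mpr hk)
  have hMpos : 0 < M := by
    rw [hMeq]; exact Nat.mul_pos hmpos hG1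
  -- the representative of x mod m
  set r : ℤ := x % (m : ℤ) with hr
  have hr0 : 0 ≤ r := Int.emod_nonneg x (by exact_mod_cast hmpos.ne')
  have hrlt : r < (m : ℤ) := Int.emod_lt_of_pos x (by exact_mod_cast hmpos)
  -- m ∣ x - r
  have hdvd : (m : ℤ) ∣ x - r := ⟨x / m, by rw [hr, Int.emod_def]; ring⟩
  -- key mod computation
  have hmod : ((G : ℤ) * x) % (M : ℤ) = (G : ℤ) * r := by
    have h1 : (M : ℤ) ∣ (G : ℤ) * x - (G : ℤ) * r := by
      rw [← mul_sub]
      obtain ⟨t, ht⟩ := hdvd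
      exact ⟨t, by rw [ht, hMeq]; push_cast; ring⟩
    have h2 : ((G : ℤ) * x) % (M : ℤ) = ((G : ℤ) * r) % (M : ℤ) :=
      by rw [Int.emod_eq_emod_iff_emod_sub_eq_zero]; exact Int.emod_eq_zero_of_dvd h1
    rw [h2, Int.emod_eq_of_lt (by positivity)]
    have : (G : ℤ) * r ≤ (G : ℤ) * ((m : ℤ) - 1) :=
      mul_le_mul_of_nonneg_left (by omega) (by positivity)
    have hMG : ((M : ℕ) : ℤ) = (m : ℤ) * (G : ℤ) := by rw [hMeq]; push_cast; ring
    nlinarith [hG1, hmpos]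
  -- rewrite both sides
  unfold repDigitSumNonneg
  rw [hcG, hmod, ← hr]
  have htoNat : ((G : ℤ) * r).toNat = G * r.toNat := by
    have h3 : (G : ℤ) * r = ((G * r.toNat : ℕ) : ℤ) := by
      push_cast; rw [Int.toNat_of_nonneg hr0]
    rw [h3, Int.toNat_natCast]
  rw [htoNat]
  have hrlt' : r.toNat < p ^ f := by
    have : (r.toNat : ℤ) < (m : ℤ) := by rwa [Int.toNat_of_nonneg hr0]
    have : r.toNat < m := by exact_mod_cast this
    omega
  have hGr : G * r.toNat = ∑ i ∈ Finset.range k, r.toNat * p ^ (f * i) := by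
    rw [hG, Finset.sum_mul]
    exact Finset.sum_congr rfl fun i _ => by rw [← pow_mul]; ring
  rw [hGr, digitSum_geom hp1 hrlt' k]
end

section
/- Let K be a finite field with q elements, ψ a nontrivial additive character of K, and d_1 < ... < d_{r+1} positive integers prime to the characteristic. For multiplicative characters ρ_1,...,ρ_{r+1}, not all trivial, the Mellin transform Σ_{(t_1,...,t_{r+1}) ∈ (K^×)^{r+1}} (Σ_{x∈K} ψ(Σ_i t_i x^{d_i})) Π_i ρ_i(t_i) equals (q−1)·Π_i g(ψ,ρ_i) if Π_i ρ_i^{d_i} is trivial, and 0 otherwise; and when all ρ_i are trivial it equals (q−1)^{r+1} + (−1)^{r+1}(q−1), which is divisible by q. -/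
open Finset

section helpers

variable {K : Type*} [Field K] [Fintype K] [DecidableEq K]

private lemma addChar_map_sum {ι : Type*} (ψ : AddChar K ℂ) (s : Finset ι) (f : ι → K) :
    ψ (∑ i ∈ s, f i) = ∏ i ∈ s, ψ (f i) := by
  classical
  induction s using Finset.cons_induction with
  | empty => simp
  | cons a s ha ih => rw [Finset.sum_cons, Finset.prod_cons, ψ.map_add_eq_mul, ih]

private lemma sum_units_eq (f : K → ℂ) :
    ∑ x : Kˣ, f (x : K) = ∑ x ∈ univ.erase (0 : K), f x := by
  refine Finset.sum_bij (fun (x : Kˣ) _ => (x : K)) (fun x _ => ?_)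
    (fun a _ b _ h => Units.ext h)
    (fun x hx => ⟨Units.mk0 x (by simpa using hx), mem_univ _, rfl⟩) (fun _ _ => rfl)
  simp [Units.ne_zero]

private lemma sum_split (f : K → ℂ) : ∑ x : K, f x = f 0 + ∑ x : Kˣ, f (x : K) := by
  rw [sum_units_eq, Finset.add_sum_erase _ f (mem_univ 0)]

private lemma sum_units_mulChar (χ : MulChar K ℂ) :
    ∑ u : Kˣ, χ (u : K) = if χ = 1 then ((Fintype.card K : ℂ) - 1) else 0 := by
  split_ifs with h
  · subst h
    simp only [MulChar.one_apply_coe]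
    rw [Finset.sum_const, card_univ, Fintype.card_units, nsmul_eq_mul, mul_one,
      Nat.cast_sub Fintype.card_pos, Nat.cast_one]
  · have h0 : χ 0 = 0 := χ.map_nonunit (by simp [isUnit_iff_ne_zero])
    have hs := MulChar.sum_eq_zero_of_ne_one h
    rw [sum_split (fun a => χ a), h0, zero_add] at hs
    exact hs

private lemma sum_units_psi (ψ : AddChar K ℂ) (hψ : ψ ≠ 1) {c : K} (hc : c ≠ 0) :
    ∑ u : Kˣ, ψ ((u : K) * c) = -1 := by
  have h := AddChar.sum_mulShift c (AddChar.IsPrimitive.of_ne_one hψ)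
  rw [if_neg hc, sum_split (fun y => ψ (y * c))] at h
  simp only [zero_mul, AddChar.map_zero_eq_one] at h
  linear_combination h

private lemma gauss_shift (ψ : AddChar K ℂ) (χ : MulChar K ℂ) (c : Kˣ) :
    ∑ u : Kˣ, ψ ((u : K) * (c : K)) * χ (u : K)
      = (∑ v : Kˣ, ψ (v : K) * χ (v : K)) * (χ (c : K))⁻¹ := by
  have hc : χ (c : K) ≠ 0 := by
    have h1 : χ (c : K) * χ ((c⁻¹ : Kˣ) : K) = 1 := by
      rw [← map_mul]; simp
    exact left_ne_zero_of_mul_eq_one h1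
  rw [Finset.sum_mul]
  refine Fintype.sum_equiv (Equiv.mulRight c) _ _ fun u => ?_
  simp only [Equiv.coe_mulRight, Units.val_mul, map_mul]
  field_simp

/-- evaluation at a unit, as a monoid hom on characters -/
private noncomputable def evalHom (a : Kˣ) : MulChar K ℂ →* ℂ where
  toFun χ := χ (a : K)
  map_one' := MulChar.one_apply_coe a
  map_mul' χ χ' := rfl

private lemma master (ψ : AddChar K ℂ) {r : ℕ} (d : Fin (r + 1) → ℕ) (hdpos : ∀ i, 0 < d i)
    (ρ : Fin (r + 1) → MulChar K ℂ) :
    (∑ t : Fin (r + 1) → Kˣ,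
        (∑ x : K, ψ (∑ i, (t i : K) * x ^ d i)) * ∏ i, ρ i (t i))
      = (∏ i, ∑ u : Kˣ, ρ i (u : K))
        + ∑ x : Kˣ, ∏ i, ∑ u : Kˣ, ψ ((u : K) * (x : K) ^ d i) * ρ i (u : K) := by
  have key : ∀ x : K,
      (∑ t : Fin (r + 1) → Kˣ, ψ (∑ i, (t i : K) * x ^ d i) * ∏ i, ρ i (t i))
        = ∏ i, ∑ u : Kˣ, ψ ((u : K) * x ^ d i) * ρ i (u : K) := by
    intro x
    rw [Fintype.prod_sum]
    refine Fintype.sum_congr _ _ fun t => ?_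
    rw [addChar_map_sum, ← Finset.prod_mul_distrib]
  calc (∑ t : Fin (r + 1) → Kˣ,
        (∑ x : K, ψ (∑ i, (t i : K) * x ^ d i)) * ∏ i, ρ i (t i))
      = ∑ x : K, ∑ t : Fin (r + 1) → Kˣ,
          ψ (∑ i, (t i : K) * x ^ d i) * ∏ i, ρ i (t i) := by
        simp_rw [Finset.sum_mul]
        exact Finset.sum_comm
    _ = ∑ x : K, ∏ i, ∑ u : Kˣ, ψ ((u : K) * x ^ d i) * ρ i (u : K) :=
        Finset.sum_congr rfl fun x _ => key x
    _ = _ := by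
        rw [sum_split]
        congr 1
        refine Finset.prod_congr rfl fun i _ => Finset.sum_congr rfl fun u _ => ?_
        rw [zero_pow (hdpos i).ne', mul_zero, AddChar.map_zero_eq_one, one_mul]

end helpers

theorem mellin_transform_trivial_chi {K : Type*} [Field K] [Fintype K] [DecidableEq K]
    (ψ : AddChar K ℂ) (hψ : ψ ≠ 1)
    (r : ℕ) (d : Fin (r + 1) → ℕ) (hd : StrictMono d) (hdpos : ∀ i, 0 < d i)
    (hdp : ∀ i, Nat.Coprime (d i) (ringChar K))
    (ρ : Fin (r + 1) → MulChar K ℂ) :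
    ((¬ ∀ i, ρ i = 1) →
      (∑ t : Fin (r + 1) → Kˣ,
          (∑ x : K, ψ (∑ i, (t i : K) * x ^ d i)) * ∏ i, ρ i (t i))
        = if (∏ i, (ρ i) ^ d i) = 1 then
            ((Fintype.card K : ℂ) - 1) * ∏ i, ∑ x : Kˣ, ψ (x : K) * ρ i (x : K)
          else 0) ∧
    ((∀ i, ρ i = 1) →
      (∑ t : Fin (r + 1) → Kˣ,
          (∑ x : K, ψ (∑ i, (t i : K) * x ^ d i)) * ∏ i, ρ i (t i))
        = ((Fintype.card K : ℂ) - 1) ^ (r + 1) +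
            (-1) ^ (r + 1) * ((Fintype.card K : ℂ) - 1)) ∧
    ((Fintype.card K : ℤ) ∣
        ((Fintype.card K : ℤ) - 1) ^ (r + 1) + (-1) ^ (r + 1) * ((Fintype.card K : ℤ) - 1)) := by
  refine ⟨?_, ?_, ?_⟩
  · intro hnt
    push_neg at hnt
    obtain ⟨i0, hi0⟩ := hnt
    rw [master ψ d hdpos ρ]
    have h1 : (∏ i, ∑ u : Kˣ, ρ i (u : K)) = 0 := by
      apply Finset.prod_eq_zero (mem_univ i0)
      rw [sum_units_mulChar, if_neg hi0]
    rw [h1, zero_add]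
    set χ : MulChar K ℂ := ∏ i, (ρ i) ^ d i with hχ
    have h2 : ∀ x : Kˣ,
        (∏ i, ∑ u : Kˣ, ψ ((u : K) * (x : K) ^ d i) * ρ i (u : K))
          = (∏ i, ∑ v : Kˣ, ψ (v : K) * ρ i (v : K)) * (χ ((x : K)))⁻¹ := by
      intro x
      have hterm : ∀ i, (∑ u : Kˣ, ψ ((u : K) * (x : K) ^ d i) * ρ i (u : K))
          = (∑ v : Kˣ, ψ (v : K) * ρ i (v : K)) * (ρ i ((x : K) ^ d i))⁻¹ := by
        intro i
        have := gauss_shift ψ (ρ i) (x ^ d i)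
        simpa using this
      rw [Finset.prod_congr rfl fun i _ => hterm i, Finset.prod_mul_distrib]
      congr 1
      rw [Finset.prod_inv_distrib]
      congr 1
      have : χ ((x : K)) = evalHom x χ := rfl
      rw [this, hχ, map_prod]
      refine Finset.prod_congr rfl fun i _ => ?_
      rw [map_pow (ρ i) ((x : K)) (d i), map_pow]; rfl
    rw [Finset.sum_congr rfl fun x _ => h2 x, ← Finset.mul_sum]
    have h3 : ∑ x : Kˣ, (χ ((x : K)))⁻¹ = ∑ x : Kˣ, χ ((x : K)) := by
      have key : ∀ x : Kˣ, (χ ((x : K)))⁻¹ = χ (((x⁻¹ : Kˣ) : K)) := by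
        intro x
        refine inv_eq_of_mul_eq_one_right ?_
        rw [← map_mul]
        simp
      simp_rw [key]
      exact Fintype.sum_equiv (Equiv.inv Kˣ) _ _ fun x => rfl
    rw [h3, sum_units_mulChar]
    split_ifs with h
    · ring
    · ring
  · intro htriv
    rw [master ψ d hdpos ρ]
    have h1 : ∀ i, (∑ u : Kˣ, ρ i (u : K)) = (Fintype.card K : ℂ) - 1 := fun i => by
      rw [sum_units_mulChar, if_pos (htriv i)]
    have h2 : ∀ x : Kˣ, (∏ i, ∑ u : Kˣ, ψ ((u : K) * (x : K) ^ d i) * ρ i (u : K))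
        = (-1 : ℂ) ^ (r + 1) := by
      intro x
      have : ∀ i, (∑ u : Kˣ, ψ ((u : K) * (x : K) ^ d i) * ρ i (u : K)) = -1 := by
        intro i
        have hx : ((x : K)) ^ d i ≠ 0 := pow_ne_zero _ (Units.ne_zero x)
        calc (∑ u : Kˣ, ψ ((u : K) * (x : K) ^ d i) * ρ i (u : K))
            = ∑ u : Kˣ, ψ ((u : K) * (x : K) ^ d i) := by
              refine Finset.sum_congr rfl fun u _ => ?_
              rw [htriv i, MulChar.one_apply_coe, mul_one]
          _ = -1 := sum_units_psi ψ hψ hx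
      rw [Finset.prod_congr rfl fun i _ => this i, Finset.prod_const, card_univ,
        Fintype.card_fin]
    rw [Finset.prod_congr rfl fun i _ => h1 i, Finset.prod_const, card_univ, Fintype.card_fin,
      Finset.sum_congr rfl fun x _ => h2 x, Finset.sum_const, card_univ, Fintype.card_units,
      nsmul_eq_mul, Nat.cast_sub Fintype.card_pos, Nat.cast_one]
    ring
  · have h1 : (Fintype.card K : ℤ) ∣
        ((Fintype.card K : ℤ) - 1) ^ (r + 1) - (-1) ^ (r + 1) := by
      have := sub_dvd_pow_sub_pow ((Fintype.card K : ℤ) - 1) (-1) (r + 1)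
      simpa using this
    have h2 : (Fintype.card K : ℤ) ∣
        (-1) ^ (r + 1) + (-1) ^ (r + 1) * ((Fintype.card K : ℤ) - 1) :=
      ⟨(-1) ^ (r + 1), by ring⟩
    have heq : ((Fintype.card K : ℤ) - 1) ^ (r + 1) +
        (-1) ^ (r + 1) * ((Fintype.card K : ℤ) - 1)
        = (((Fintype.card K : ℤ) - 1) ^ (r + 1) - (-1) ^ (r + 1)) +
          ((-1) ^ (r + 1) + (-1) ^ (r + 1) * ((Fintype.card K : ℤ) - 1)) := by ring
    rw [heq]
    exact dvd_add h1 h2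
end

section
/- Let p be a prime and suppose there exists a real constant A ≥ 0 such that for every positive integer f and integers 0 ≤ x_2,...,x_{r+1} < p^f−1, not all zero, one has s_p(Σ_i d_i x_i) ≤ Σ_i s_p(x_i) + f(p−1)/2 + A, where d_2,...,d_{r+1} are fixed positive integers prime to p. Then for every positive integer f and every such tuple not all zero, [Σ_i d_i x_i]_{p,f} ≤ Σ_i [x_i]_{p,f,-} + f(p−1)/2, where [·]_{p,f} and [·]_{p,f,-} are the digit sums of representatives mod p^f−1 in [1,p^f−1] and [0,p^f−2] respectively. -/
open Finset

/-- Digit sum of the representative of `y` modulo `m` lying in `[1, m]`. -/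
def repDigitSumPos (p m : ℕ) (y : ℤ) : ℕ :=
  if (m : ℤ) ∣ y then digitSum p m else digitSum p (y % (m : ℤ)).toNat


lemma ds_rec {p : ℕ} (hp : 2 ≤ p) (n : ℕ) :
    digitSum p n = n % p + digitSum p (n / p) := by
  rcases Nat.eq_zero_or_pos n with h | h
  · simp [h, digitSum]
  · unfold digitSum
    rw [Nat.digits_def' (by omega) h]
    simp

lemma ds_subadd3 {p : ℕ} (hp : 2 ≤ p) :
    ∀ n a b c, a + b + c = n → c ≤ 1 →
      digitSum p (a + b + c) ≤ digitSum p a + digitSum p b + c := by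
  intro n
  induction n using Nat.strong_induction_on with
  | _ n ih =>
    intro a b c hn hc
    rcases Nat.eq_zero_or_pos n with h0 | h0
    · have ha : a = 0 := by omega
      have hb : b = 0 := by omega
      have hc0 : c = 0 := by omega
      subst ha hb hc0; simp [digitSum]
    · have hda := Nat.div_add_mod a p
      have hdb := Nat.div_add_mod b p
      set t := a % p + b % p + c with ht
      have hdt := Nat.div_add_mod t p
      have htp : t % p < p := Nat.mod_lt _ (by omega)
      have hkey : a + b + c = p * (a / p + b / p + t / p) + t % p := by
        have hexp : p * (a / p + b / p + t / p) = p * (a/p) + p * (b/p) + p * (t/p) := by ring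
        omega
      have hdiv : (a + b + c) / p = a / p + b / p + t / p := by
        rw [hkey, Nat.mul_add_div (by omega)]
        rw [Nat.div_eq_of_lt htp]
        omega
      have hmod : (a + b + c) % p = t % p := by
        rw [hkey, Nat.mul_add_mod, Nat.mod_eq_of_lt htp]
      have hma : a % p < p := Nat.mod_lt _ (by omega)
      have hmb : b % p < p := Nat.mod_lt _ (by omega)
      have hct : t / p ≤ 1 := by
        have h2 : t / p < 2 := (Nat.div_lt_iff_lt_mul (by omega)).mpr (by omega)
        omega
      have hlt : a / p + b / p + t / p < n := by
        rw [← hdiv, ← hn]; exact Nat.div_lt_self (by omega) (by omega)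
      have hihapp := ih _ hlt (a / p) (b / p) (t / p) rfl hct
      rw [ds_rec hp (a + b + c), hmod, hdiv]
      rw [ds_rec hp a, ds_rec hp b]
      have hle : t / p ≤ p * (t / p) := Nat.le_mul_of_pos_left _ (by omega)
      omega

lemma ds_subadd {p : ℕ} (hp : 2 ≤ p) (a b : ℕ) :
    digitSum p (a + b) ≤ digitSum p a + digitSum p b := by
  have := ds_subadd3 hp (a + b + 0) a b 0 rfl (by omega)
  simpa using this

lemma ds_blocks {p : ℕ} (hp : 2 ≤ p) :
    ∀ (F a b : ℕ), b < p ^ F → digitSum p (a * p ^ F + b) = digitSum p a + digitSum p b := by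
  intro F
  induction F with
  | zero =>
    intro a b hb
    simp only [pow_zero] at hb
    have : b = 0 := by omega
    simp [this, digitSum]
  | succ F ihF =>
    intro a b hb
    have hp0 : 0 < p := by omega
    have hmp : b % p < p := Nat.mod_lt _ hp0
    have key : a * p ^ (F+1) + b = p * (a * p ^ F + b / p) + b % p := by
      have := Nat.div_add_mod b p
      ring_nf
      omega
    have h1 : (a * p ^ (F+1) + b) % p = b % p := by
      rw [key, Nat.mul_add_mod, Nat.mod_eq_of_lt hmp]
    have h2 : (a * p ^ (F+1) + b) / p = a * p ^ F + b / p := by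
      rw [key, Nat.mul_add_div hp0, Nat.div_eq_of_lt hmp]
      omega
    rw [ds_rec hp (a * p ^ (F+1) + b), h1, h2,
      ihF a (b / p) ((Nat.div_lt_iff_lt_mul hp0).mpr (by rw [pow_succ] at hb; omega)),
      ds_rec hp b]
    omega

lemma geom_eq {p f : ℕ} (hp : 2 ≤ p) (k : ℕ) :
    (p ^ f - 1) * ∑ j ∈ range k, p ^ (f * j) = p ^ (f * k) - 1 := by
  induction k with
  | zero => simp
  | succ k ih =>
    rw [Finset.sum_range_succ, Nat.mul_add, ih]
    have h1 : 1 ≤ p ^ (f * k) := Nat.one_le_pow _ _ (by omega)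
    have h2 : 1 ≤ p ^ f := Nat.one_le_pow _ _ (by omega)
    have h3 : p ^ (f * (k+1)) = p ^ f * p ^ (f * k) := by rw [← pow_add]; ring_nf
    have h4 : (p ^ f - 1) * p ^ (f * k) = p ^ f * p ^ (f*k) - p ^ (f*k) := by
      rw [Nat.sub_mul, one_mul]
    have h5 : p ^ (f*k) ≤ p ^ f * p ^ (f*k) := Nat.le_mul_of_pos_left _ (by omega)
    omega

lemma ds_repl {p f : ℕ} (hp : 2 ≤ p) (hf : 0 < f) (x : ℕ) (hx : x < p ^ f) (k : ℕ) :
    digitSum p (x * ∑ j ∈ range k, p ^ (f * j)) = k * digitSum p x := by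
  induction k with
  | zero => simp [digitSum]
  | succ k ih =>
    rw [Finset.sum_range_succ, Nat.mul_add]
    have hb : x * ∑ j ∈ range k, p ^ (f * j) < p ^ (f * k) := by
      have h1 : x * ∑ j ∈ range k, p ^ (f * j) ≤ (p ^ f - 1) * ∑ j ∈ range k, p ^ (f * j) :=
        Nat.mul_le_mul_right _ (by omega)
      rw [geom_eq hp] at h1
      have : 1 ≤ p ^ (f * k) := Nat.one_le_pow _ _ (by omega)
      omega
    rw [add_comm, ds_blocks hp (f * k) x _ hb, ih]
    ring

def repN (p m n : ℕ) : ℕ := if m ∣ n then digitSum p m else digitSum p (n % m)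

lemma rep_cast (p m n : ℕ) : repDigitSumPos p m (n : ℤ) = repN p m n := by
  unfold repDigitSumPos repN
  by_cases h : m ∣ n
  · rw [if_pos ((Int.natCast_dvd_natCast).mpr h), if_pos h]
  · rw [if_neg (fun hh => h ((Int.natCast_dvd_natCast).mp hh)), if_neg h]
    norm_cast

lemma repN_congr {p m : ℕ} (a b : ℕ) (h : a % m = b % m) (hd : m ∣ a ↔ m ∣ b) :
    repN p m a = repN p m b := by
  unfold repN
  by_cases hma : m ∣ a
  · rw [if_pos hma, if_pos (hd.mp hma)]
  · rw [if_neg hma, if_neg (fun hb => hma (hd.mpr hb)), h]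

lemma repN_le {p F : ℕ} (hp : 2 ≤ p) (hF : 0 < F) :
    ∀ n, 0 < n → repN p (p ^ F - 1) n ≤ digitSum p n := by
  intro n
  induction n using Nat.strong_induction_on with
  | _ n ih =>
    intro hn
    have hpF : 2 ≤ p ^ F := by
      calc 2 = 2 ^ 1 := rfl
      _ ≤ p ^ F := Nat.pow_le_pow_left (by omega) 1 |>.trans (Nat.pow_le_pow_right (by omega) hF)
    set m := p ^ F - 1 with hm
    have hm1 : 1 ≤ m := by omega
    by_cases hsmall : n < p ^ F
    · by_cases hdvd : m ∣ n
      · have : n = m := by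
          have h1 : m ≤ n := Nat.le_of_dvd hn hdvd
          omega
        unfold repN
        rw [if_pos hdvd, this]
      · have hne : n ≠ m := fun h => hdvd (h ▸ dvd_rfl)
        unfold repN
        rw [if_neg hdvd, Nat.mod_eq_of_lt (by omega)]
    · push_neg at hsmall
      set a := n / p ^ F with ha
      set b := n % p ^ F with hb
      have hab : a * p ^ F + b = n := by
        rw [ha, hb, Nat.mul_comm]; exact Nat.div_add_mod n (p ^ F)
      have ha1 : 1 ≤ a := Nat.one_le_div_iff (by omega) |>.mpr hsmall
      have hblt : b < p ^ F := Nat.mod_lt _ (by omega)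
      have hsplit : digitSum p n = digitSum p a + digitSum p b := by
        rw [← hab]; exact ds_blocks hp F a b hblt
      have hlt : a + b < n := by
        have : a + b < a * p ^ F + b := by
          have : a < a * p ^ F := (Nat.lt_mul_iff_one_lt_right (by omega)).mpr (by omega)
          omega
        omega
      have ham : a * p ^ F = a * m + a := by
        have h1 : a * p ^ F = a * (m + 1) := by rw [hm]; congr 1; omega
        rw [h1, Nat.mul_add, Nat.mul_one]
      have hnab : n = (a + b) + a * m := by omega
      have hcong : repN p m n = repN p m (a + b) := by
        apply repN_congr
        · rw [hnab, Nat.add_mul_mod_self_right]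
        · rw [hnab, add_comm]
          exact Nat.dvd_add_right (dvd_mul_left m a)
      calc repN p m n = repN p m (a + b) := hcong
        _ ≤ digitSum p (a + b) := ih _ hlt (Nat.add_pos_left ha1 b)
        _ ≤ digitSum p a + digitSum p b := ds_subadd hp a b
        _ = digitSum p n := hsplit.symm

lemma repN_mul {p f k : ℕ} (hp : 2 ≤ p) (hf : 0 < f) (hk : 0 < k) (y : ℕ) :
    repN p (p ^ (f * k) - 1) (y * ∑ j ∈ range k, p ^ (f * j)) = k * repN p (p ^ f - 1) y := by
  set M := ∑ j ∈ range k, p ^ (f * j) with hM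
  set m := p ^ f - 1 with hm
  have hpf : 2 ≤ p ^ f := by
    calc 2 = 2 ^ 1 := rfl
    _ ≤ p ^ f := Nat.pow_le_pow_left (by omega) 1 |>.trans (Nat.pow_le_pow_right (by omega) hf)
  have hm1 : 1 ≤ m := by omega
  have hM1 : 1 ≤ M := by
    rw [hM]
    calc 1 = ∑ j ∈ range 1, p ^ (f * j) := by simp
    _ ≤ M := Finset.sum_le_sum_of_subset (by simp [hk])
  have hmm : m * M = p ^ (f * k) - 1 := geom_eq hp k
  by_cases hdvd : m ∣ y
  · rcases hdvd with ⟨t, ht⟩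
    have hdvd' : (p ^ (f * k) - 1) ∣ y * M := by
      rw [← hmm, ht]; exact ⟨t, by ring⟩
    unfold repN
    rw [if_pos hdvd', if_pos ⟨t, ht⟩, ← hmm, ds_repl hp hf m (by omega) k]
  · have hrlt : y % m < m := Nat.mod_lt _ (by omega)
    have hsplit : y * M = (y % m) * M + (y / m) * (m * M) := by
      have := Nat.div_add_mod y m
      calc y * M = (m * (y / m) + y % m) * M := by rw [this]
      _ = (y % m) * M + (y / m) * (m * M) := by ring
    have hlt : (y % m) * M < m * M := mul_lt_mul_of_pos_right hrlt (by omega)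
    have hmod : (y * M) % (m * M) = (y % m) * M := by
      rw [hsplit, Nat.add_mul_mod_self_right, Nat.mod_eq_of_lt hlt]
    have hndvd : ¬ (p ^ (f * k) - 1) ∣ y * M := by
      rw [← hmm]
      intro hd
      rw [Nat.dvd_iff_mod_eq_zero, hmod] at hd
      have : y % m = 0 := by
        rcases Nat.mul_eq_zero.mp hd with h | h
        · exact h
        · omega
      exact hdvd (Nat.dvd_of_mod_eq_zero this)
    unfold repN
    rw [if_neg hndvd, if_neg hdvd, ← hmm, hmod]
    exact ds_repl hp hf (y % m) (by omega) k

theorem finite_monodromy_digit_criterion (p : ℕ) (hp : p.Prime) (r : ℕ)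
    (d : Fin r → ℕ) (hdpos : ∀ i, 0 < d i) (hdp : ∀ i, Nat.Coprime (d i) p)
    (hA : ∃ A : ℝ, 0 ≤ A ∧ ∀ f : ℕ, 0 < f → ∀ x : Fin r → ℕ,
      (∀ i, x i < p ^ f - 1) → (∃ i, x i ≠ 0) →
      (digitSum p (∑ i, d i * x i) : ℝ)
        ≤ (∑ i, (digitSum p (x i) : ℝ)) + f * ((p : ℝ) - 1) / 2 + A) :
    ∀ f : ℕ, 0 < f → ∀ x : Fin r → ℕ,
      (∀ i, x i < p ^ f - 1) → (∃ i, x i ≠ 0) →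
      (repDigitSumPos p (p ^ f - 1) ((∑ i, d i * x i : ℕ) : ℤ) : ℝ)
        ≤ (∑ i, (digitSum p (x i) : ℝ)) + f * ((p : ℝ) - 1) / 2 := by
  obtain ⟨A, hA0, hAb⟩ := hA
  intro f hf x hx hex
  have hp2 : 2 ≤ p := hp.two_le
  have hpf : 2 ≤ p ^ f := by
    calc 2 = 2 ^ 1 := rfl
    _ ≤ p ^ f := (Nat.pow_le_pow_left hp2 1).trans (Nat.pow_le_pow_right (by omega) hf)
  set y := ∑ i, d i * x i with hy
  have hy0 : 0 < y := by
    obtain ⟨i, hi⟩ := hex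
    have h1 : 0 < d i * x i := Nat.mul_pos (hdpos i) (Nat.pos_of_ne_zero hi)
    exact lt_of_lt_of_le h1
      (Finset.single_le_sum (f := fun i => d i * x i) (fun i _ => Nat.zero_le _) (mem_univ i))
  rw [rep_cast]
  set L : ℝ := (repN p (p ^ f - 1) y : ℝ) with hL
  set S : ℝ := ∑ i, (digitSum p (x i) : ℝ) with hS
  set R : ℝ := S + f * ((p : ℝ) - 1) / 2 with hR
  have key : ∀ k : ℕ, 0 < k → (k : ℝ) * L ≤ (k : ℝ) * R + A := by
    intro k hk
    set M := ∑ j ∈ range k, p ^ (f * j) with hM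
    have hM1 : 1 ≤ M := by
      rw [hM]
      calc 1 = ∑ j ∈ range 1, p ^ (f * j) := by simp
      _ ≤ M := Finset.sum_le_sum_of_subset (by simp [hk])
    have hgeo : (p ^ f - 1) * M = p ^ (f * k) - 1 := geom_eq hp2 k
    have hfk : 0 < f * k := Nat.mul_pos hf hk
    have h1 : k * repN p (p ^ f - 1) y = repN p (p ^ (f * k) - 1) (y * M) :=
      (repN_mul hp2 hf hk y).symm
    have h2 : repN p (p ^ (f * k) - 1) (y * M) ≤ digitSum p (y * M) :=
      repN_le hp2 hfk _ (Nat.mul_pos hy0 (by omega))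
    have hsum : ∑ i, d i * (x i * M) = y * M := by
      rw [hy, Finset.sum_mul]
      exact Finset.sum_congr rfl (fun i _ => (mul_assoc _ _ _).symm)
    have hbounds : ∀ i, x i * M < p ^ (f * k) - 1 := by
      intro i
      have hxi : x i ≤ p ^ f - 2 := by have := hx i; omega
      have h3 : x i * M ≤ (p ^ f - 2) * M := Nat.mul_le_mul_right M hxi
      have h4 : (p ^ f - 1) * M = (p ^ f - 2) * M + M := by
        have : p ^ f - 1 = (p ^ f - 2) + 1 := by omega
        rw [this, Nat.succ_mul]
      omega
    have hex' : ∃ i, x i * M ≠ 0 := by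
      obtain ⟨i, hi⟩ := hex
      exact ⟨i, Nat.mul_ne_zero hi (by omega)⟩
    have h3 := hAb (f * k) hfk (fun i => x i * M) hbounds hex'
    simp only [hsum] at h3
    have hds : ∀ i, digitSum p (x i * M) = k * digitSum p (x i) := fun i =>
      ds_repl hp2 hf (x i) (by have := hx i; omega) k
    have hsum2 : (∑ i, (digitSum p (x i * M) : ℝ)) = (k : ℝ) * S := by
      rw [hS, Finset.mul_sum]
      exact Finset.sum_congr rfl (fun i _ => by rw [hds i]; push_cast; ring)
    calc (k : ℝ) * L = (repN p (p ^ (f * k) - 1) (y * M) : ℝ) := by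
          rw [hL, ← Nat.cast_mul, h1]
      _ ≤ (digitSum p (y * M) : ℝ) := by exact_mod_cast h2
      _ ≤ (∑ i, (digitSum p (x i * M) : ℝ)) + (f * k : ℕ) * ((p : ℝ) - 1) / 2 + A := h3
      _ = (k : ℝ) * S + (k : ℝ) * (f * ((p : ℝ) - 1) / 2) + A := by
          rw [hsum2]; push_cast; ring
      _ = (k : ℝ) * R + A := by rw [hR]; ring
  by_contra hcon
  push_neg at hcon
  set c : ℝ := L - R with hc
  have hc0 : 0 < c := by rw [hc]; linarith
  set k : ℕ := ⌈A / c⌉₊ + 1 with hk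
  have hk0 : 0 < k := by omega
  have h5 := key k hk0
  have h6 : A / c < (k : ℝ) := by
    have := Nat.le_ceil (A / c)
    have hcast : ((⌈A / c⌉₊ : ℕ) : ℝ) < (k : ℝ) := by exact_mod_cast Nat.lt_succ_self _
    linarith
  have h7 : A < c * k := by
    rw [div_lt_iff₀ hc0] at h6
    linarith
  have hkR : (k : ℝ) * L = (k : ℝ) * R + (k:ℝ) * c := by rw [hc]; ring
  nlinarith
end
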